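/- arXiv:1401.2971 — 2 statements merged into one kernel-verified Lean document; each statement's English description precedes it below -/
import Mathlib

section
/- Let V ∈ S(ℝ^d) be such that V̂(ξ) is real and nonnegative for every ξ ∈ ℝ^d. If C_ℓ(V) = 0 for some integer ℓ ≥ 2, then V(x) = 0 for all x ∈ ℝ^d. -/
open MeasureTheory Real Filter Topology Asymptotics
open scoped RealInnerProductSpace

noncomputable section

/-- Euclidean space ℝ^d. -/
abbrev Ed (d : ℕ) : Type := EuclideanSpace ℝ (Fin d)

/-- The α-stable heat kernel `p_t^{(α)}(x) = (2π)^{-d} ∫ cos(x·ξ) e^{-t|ξ|^α} dξ` on ℝ^d. -/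
def heatKernel (d : ℕ) (α t : ℝ) (x : Ed d) : ℝ :=
  ((2 * Real.pi) ^ d)⁻¹ * ∫ ξ : Ed d, Real.cos (inner ℝ x ξ : ℝ) * Real.exp (-t * ‖ξ‖ ^ α)

/-- Two-point heat kernel `p_t^{(α)}(x,y) = p_t^{(α)}(x-y)`. -/
def heatKernelP (d : ℕ) (α t : ℝ) (x y : Ed d) : ℝ := heatKernel d α t (x - y)

/-- The simplex `I_k = {0 < λ_k < ⋯ < λ_1 < 1}` (0-indexed: `lam 0 = λ_1`). -/
def Ik (k : ℕ) : Set (Fin k → ℝ) :=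
  {lam | (∀ i j : Fin k, i < j → lam j < lam i) ∧ ∀ i, lam i ∈ Set.Ioo (0 : ℝ) 1}

/-- `p(t,z,λ) = ∏_{j=1}^{k-1} p_{t(λ_j - λ_{j+1})}^{(α)}(z_j, z_{j+1})`. -/
def pChain (d : ℕ) (α : ℝ) {k : ℕ} (t : ℝ) (lam : Fin k → ℝ) (z : Fin k → Ed d) : ℝ :=
  ∏ j : Fin (k - 1),
    heatKernelP d α
      (t * (lam ⟨j.1, by have := j.isLt; omega⟩ - lam ⟨j.1 + 1, by have := j.isLt; omega⟩))
      (z ⟨j.1, by have := j.isLt; omega⟩) (z ⟨j.1 + 1, by have := j.isLt; omega⟩)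

/-- `a_k(t) = ∫_{I_k} ∫_{(ℝ^d)^k} V_k(z) p(t,z,λ) dz dλ`. -/
def aCoeff (d : ℕ) (α : ℝ) (V : Ed d → ℝ) (k : ℕ) (t : ℝ) : ℝ :=
  ∫ lam in Ik k, ∫ z : (Fin k → Ed d), (∏ i, V (z i)) * pChain d α t lam z

/-- The heat content `Q_V^{(α)}(t) = Σ_{k=1}^∞ (-t)^k a_k(t)`. -/
def Qheat (d : ℕ) (α : ℝ) (V : Ed d → ℝ) (t : ℝ) : ℝ :=
  ∑' k : ℕ, (-t) ^ (k + 1) * aCoeff d α V (k + 1) t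

/-- Fourier transform `V̂(ξ) = ∫ e^{-i x·ξ} V(x) dx`. -/
def ftransform (d : ℕ) (V : Ed d → ℝ) (ξ : Ed d) : ℂ :=
  ∫ x : Ed d, Complex.exp (-Complex.I * ((inner ℝ x ξ : ℝ) : ℂ)) * (V x : ℂ)

/-- The fractional Laplacian `(-Δ)^{α/2} V(x) = (2π)^{-d} ∫ e^{i x·ξ} |ξ|^α V̂(ξ) dξ`
(real valued for real `V`). -/
def fracLap (d : ℕ) (α : ℝ) (V : Ed d → ℝ) (x : Ed d) : ℝ :=
  ((2 * Real.pi) ^ d)⁻¹ *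
    (∫ ξ : Ed d, Complex.exp (Complex.I * ((inner ℝ x ξ : ℝ) : ℂ)) * ((‖ξ‖ ^ α : ℝ) : ℂ) *
      ftransform d V ξ).re

/-- The Dirichlet form `E_α(V) = (2π)^{-d} ∫ |V̂(ξ)|² |ξ|^α dξ`. -/
def dirichletForm (d : ℕ) (α : ℝ) (V : Ed d → ℝ) : ℝ :=
  ((2 * Real.pi) ^ d)⁻¹ * ∫ ξ : Ed d, ‖ftransform d V ξ‖ ^ 2 * ‖ξ‖ ^ α

/-- `A(n, ℓ)` from the paper. -/
def Acoef (k n : ℕ) (l : Fin (k - 1) → ℕ) : ℝ :=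
  ((n.factorial : ℝ) / ∏ i, ((l i).factorial : ℝ)) *
    ∫ lam in Ik k, ∏ i : Fin (k - 1),
      (lam ⟨i.1, by have := i.isLt; omega⟩ - lam ⟨i.1 + 1, by have := i.isLt; omega⟩) ^ (l i)

/-- The coefficient `C_{n,k}(V)`. -/
def Cnk (d : ℕ) (α : ℝ) (V : Ed d → ℝ) (n k : ℕ) : ℝ :=
  ∑ l ∈ Finset.Nat.antidiagonalTuple (k - 1) n,
    Acoef k n l *
      (((2 * Real.pi) ^ (d * (k - 1)))⁻¹ *
        (∫ θ : (Fin (k - 1) → Ed d),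
          ftransform d V (-(∑ i, θ i)) *
            ∏ i : Fin (k - 1),
              (ftransform d V (θ i) *
                ((‖∑ j ∈ Finset.Iic i, θ j‖ ^ (α * (l i : ℝ)) : ℝ) : ℂ))).re)

/-- The coefficient `C_ℓ(V) = Σ_{n+k=ℓ, k ≥ 2} C_{n,k}(V)/n!`. -/
def Cl (d : ℕ) (α : ℝ) (V : Ed d → ℝ) (m : ℕ) : ℝ :=
  ∑ p ∈ (Finset.HasAntidiagonal.antidiagonal m).filter (fun p => 2 ≤ p.2),
    Cnk d α V p.1 p.2 / (p.1.factorial : ℝ)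

/-- `T_k(t)` from the paper. -/
def Tk (d : ℕ) (α : ℝ) (V : Ed d → ℝ) (k : ℕ) (t : ℝ) : ℝ :=
  (∫ lam in Ik k,
    ((((2 * Real.pi) ^ (d * (k - 1)))⁻¹ : ℝ) : ℂ) *
      ∫ θ : (Fin (k - 1) → Ed d),
        ftransform d V (-(∑ i, θ i)) * (∏ i, ftransform d V (θ i)) *
          ((Real.exp (-(t * ∑ r : Fin (k - 1),
            (lam ⟨r.1, by have := r.isLt; omega⟩ - lam ⟨r.1 + 1, by have := r.isLt; omega⟩) *
              ‖∑ m ∈ Finset.Iic r, θ m‖ ^ α)) : ℝ) : ℂ)).re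


section AuxLemmas

open FourierTransform
open scoped RealInnerProductSpace

/-- Complexification of a real Schwartz map. -/
def cplx {E : Type*} [NormedAddCommGroup E] [NormedSpace ℝ E] (V : SchwartzMap E ℝ) :
    SchwartzMap E ℂ where
  toFun x := (V x : ℂ)
  smooth' := Complex.ofRealCLM.contDiff.comp (V.smooth ⊤)
  decay' := by
    intro k n
    obtain ⟨C, hC⟩ := V.decay' k n
    refine ⟨C, fun x => ?_⟩
    have h2 := V.smooth ⊤
    have := Complex.ofRealLI.norm_iteratedFDeriv_comp_left (i := n) (h2.contDiffAt (x := x)) (by exact_mod_cast le_top)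
    calc ‖x‖ ^ k * ‖iteratedFDeriv ℝ n (fun y => ((V y : ℂ))) x‖
        = ‖x‖ ^ k * ‖iteratedFDeriv ℝ n (⇑V) x‖ := by
          rw [show (fun y => ((V y : ℝ) : ℂ)) = (Complex.ofRealLI ∘ ⇑V) from rfl, this]
      _ ≤ C := hC x

lemma ftransform_eq_fourierIntegral (d : ℕ) (V : Ed d → ℝ) (ξ : Ed d) :
    ftransform d V ξ = 𝓕 (fun x => ((V x : ℝ) : ℂ)) ((2 * π)⁻¹ • ξ) := by
  rw [ftransform, Real.fourier_eq']
  refine integral_congr_ae (Filter.Eventually.of_forall fun x => ?_)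
  have h1 : ⟪x, (2 * π)⁻¹ • ξ⟫ = (2 * π)⁻¹ * ⟪x, ξ⟫ := real_inner_smul_right x ξ _
  have hπ : (2 * π) ≠ 0 := by positivity
  simp only [smul_eq_mul]
  rw [show ((-2 * π * ⟪x, (2 * π)⁻¹ • ξ⟫ : ℝ) : ℂ) * Complex.I
      = -Complex.I * ((⟪x, ξ⟫ : ℝ) : ℂ) by
    rw [h1, show -2 * π * ((2 * π)⁻¹ * ⟪x, ξ⟫) = -⟪x, ξ⟫ by field_simp]
    push_cast; ring]

lemma ftransform_neg (d : ℕ) (V : Ed d → ℝ) (ξ : Ed d) :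
    ftransform d V (-ξ) = starRingEnd ℂ (ftransform d V ξ) := by
  rw [ftransform, ftransform, ← integral_conj]
  refine integral_congr_ae (Filter.Eventually.of_forall fun x => ?_)
  simp only [map_mul, ← Complex.exp_conj, map_neg, Complex.conj_I, Complex.conj_ofReal,
    inner_neg_right]
  push_cast
  ring_nf

lemma isOpen_Ik (k : ℕ) : IsOpen (Ik k) := by
  have : Ik k = (⋂ i : Fin k, ⋂ j : Fin k, {lam : Fin k → ℝ | i < j → lam j < lam i}) ∩
      ⋂ i : Fin k, (fun lam : Fin k → ℝ => lam i) ⁻¹' Set.Ioo 0 1 := by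
    ext lam
    simp only [Ik, Set.mem_setOf_eq, Set.mem_inter_iff, Set.mem_iInter, Set.mem_preimage]
  rw [this]
  refine IsOpen.inter (isOpen_iInter_of_finite fun i => isOpen_iInter_of_finite fun j => ?_)
    (isOpen_iInter_of_finite fun i => isOpen_Ioo.preimage (continuous_apply i))
  by_cases h : i < j
  · have : {lam : Fin k → ℝ | i < j → lam j < lam i} = {lam | lam j < lam i} := by
      ext lam; simp [h]
    rw [this]
    exact isOpen_lt (continuous_apply j) (continuous_apply i)
  · have : {lam : Fin k → ℝ | i < j → lam j < lam i} = Set.univ := by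
      ext lam; simp [h]
    rw [this]; exact isOpen_univ

lemma Acoef_nonneg (k n : ℕ) (l : Fin (k - 1) → ℕ) : 0 ≤ Acoef k n l := by
  refine mul_nonneg (div_nonneg (Nat.cast_nonneg _)
    (Finset.prod_nonneg fun i _ => Nat.cast_nonneg _)) ?_
  refine setIntegral_nonneg (isOpen_Ik k).measurableSet fun lam hlam => ?_
  refine Finset.prod_nonneg fun i _ => pow_nonneg (sub_nonneg.2 (le_of_lt ?_)) _
  exact hlam.1 ⟨i.1, by have := i.isLt; omega⟩ ⟨i.1 + 1, by have := i.isLt; omega⟩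
    (by simp [Fin.mk_lt_mk])

lemma Acoef_two_pos (n : ℕ) : 0 < Acoef 2 n ![n] := by
  have hfac : ((n.factorial : ℝ) / ∏ i : Fin 1, ((![n] i).factorial : ℝ)) = 1 := by
    rw [Fin.prod_univ_one]
    simp [div_self, Nat.cast_ne_zero, Nat.factorial_ne_zero]
  rw [Acoef]
  rw [show (∏ i : Fin (2-1), ((![n] i).factorial : ℝ)) = ∏ i : Fin 1, ((![n] i).factorial : ℝ)
    from rfl, hfac, one_mul]
  have hint : ∀ lam : Fin 2 → ℝ, (∏ i : Fin (2-1),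
      (lam ⟨i.1, by have := i.isLt; omega⟩ - lam ⟨i.1 + 1, by have := i.isLt; omega⟩) ^ (![n] i))
      = (lam 0 - lam 1) ^ n := by
    intro lam
    rw [show (∏ i : Fin (2-1),
      (lam ⟨i.1, by have := i.isLt; omega⟩ - lam ⟨i.1 + 1, by have := i.isLt; omega⟩) ^ (![n] i))
      = (lam ⟨0, by omega⟩ - lam ⟨1, by omega⟩) ^ (![n] 0) from Fin.prod_univ_one _]
    norm_num
  rw [integral_congr_ae (Filter.Eventually.of_forall fun lam => hint lam)]
  set f : (Fin 2 → ℝ) → ℝ := fun lam => (lam 0 - lam 1) ^ n with hf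
  have hcont : Continuous f := by fun_prop
  have hsub : Ik 2 ⊆ Set.pi Set.univ (fun _ : Fin 2 => Set.Ioo (0:ℝ) 1) :=
    fun lam h i _ => h.2 i
  have hfin : volume (Ik 2) < ⊤ := by
    refine lt_of_le_of_lt (measure_mono hsub) ?_
    rw [volume_pi_pi]
    simp
  have hintg : IntegrableOn f (Ik 2) := by
    refine Measure.integrableOn_of_bounded (M := 1) hfin.ne hcont.aestronglyMeasurable ?_
    refine ae_restrict_of_forall_mem (isOpen_Ik 2).measurableSet fun lam hlam => ?_
    have h1 : lam 1 < lam 0 := hlam.1 0 1 (by norm_num)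
    have h2 := hlam.2 0
    have h3 := hlam.2 1
    simp only [Set.mem_Ioo] at h2 h3
    rw [hf, Real.norm_eq_abs, abs_pow]
    refine pow_le_one₀ (abs_nonneg _) ?_
    rw [abs_of_nonneg (by linarith)]
    linarith
  have h0 : 0 ≤ᵐ[volume.restrict (Ik 2)] f := by
    refine ae_restrict_of_forall_mem (isOpen_Ik 2).measurableSet fun lam hlam => ?_
    have h1 : lam 1 < lam 0 := hlam.1 0 1 (by norm_num)
    exact pow_nonneg (by linarith) _
  rw [setIntegral_pos_iff_support_of_nonneg_ae h0 hintg]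
  have hss : Ik 2 ⊆ Function.support f ∩ Ik 2 := by
    intro lam hlam
    have h1 : lam 1 < lam 0 := hlam.1 0 1 (by norm_num)
    exact ⟨ne_of_gt (pow_pos (by linarith) _), hlam⟩
  refine lt_of_lt_of_le ?_ (measure_mono hss)
  refine (isOpen_Ik 2).measure_pos volume ⟨![2/3, 1/3], ?_, ?_⟩
  · intro i j hij
    fin_cases i <;> fin_cases j <;> simp_all <;> norm_num
  · intro i; fin_cases i <;> norm_num

lemma key_re (d k' : ℕ) (α : ℝ) (V : Ed d → ℝ)
    (hre : ∀ ξ, ftransform d V ξ = (((ftransform d V ξ).re : ℝ) : ℂ)) (lv : Fin k' → ℕ) :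
    (∫ θ : Fin k' → Ed d, ftransform d V (-(∑ i, θ i)) *
        ∏ i, (ftransform d V (θ i) *
          ((‖∑ j ∈ Finset.Iic i, θ j‖ ^ (α * (lv i : ℝ)) : ℝ) : ℂ))).re
    = ∫ θ : Fin k' → Ed d, (ftransform d V (-(∑ i, θ i))).re *
        ∏ i, ((ftransform d V (θ i)).re * ‖∑ j ∈ Finset.Iic i, θ j‖ ^ (α * (lv i : ℝ))) := by
  have heq : (fun θ : Fin k' → Ed d => ftransform d V (-(∑ i, θ i)) *
      ∏ i, (ftransform d V (θ i) * ((‖∑ j ∈ Finset.Iic i, θ j‖ ^ (α * (lv i : ℝ)) : ℝ) : ℂ)))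
      = fun θ => ((((ftransform d V (-(∑ i, θ i))).re *
        ∏ i, ((ftransform d V (θ i)).re * ‖∑ j ∈ Finset.Iic i, θ j‖ ^ (α * (lv i : ℝ))) : ℝ)) : ℂ) := by
    funext θ
    rw [hre (-(∑ i, θ i))]
    rw [show (∏ i, (ftransform d V (θ i) *
          ((‖∑ j ∈ Finset.Iic i, θ j‖ ^ (α * (lv i : ℝ)) : ℝ) : ℂ)))
        = ((∏ i, ((ftransform d V (θ i)).re *
          ‖∑ j ∈ Finset.Iic i, θ j‖ ^ (α * (lv i : ℝ))) : ℝ) : ℂ) by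
      rw [Complex.ofReal_prod]
      refine Finset.prod_congr rfl fun i _ => ?_
      rw [hre (θ i)]; push_cast [Complex.ofReal_re]; ring]
    push_cast [Complex.ofReal_re]; ring
  rw [heq]
  rw [show (∫ θ : Fin k' → Ed d, (((ftransform d V (-(∑ i, θ i))).re *
      ∏ i, ((ftransform d V (θ i)).re * ‖∑ j ∈ Finset.Iic i, θ j‖ ^ (α * (lv i : ℝ))) : ℝ) : ℂ))
      = (((∫ θ : Fin k' → Ed d, (ftransform d V (-(∑ i, θ i))).re *
      ∏ i, ((ftransform d V (θ i)).re * ‖∑ j ∈ Finset.Iic i, θ j‖ ^ (α * (lv i : ℝ))) : ℝ)) : ℂ)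
    from integral_ofReal, Complex.ofReal_re]

lemma Cnk_nonneg (d : ℕ) (α : ℝ) (V : Ed d → ℝ)
    (hre : ∀ ξ, ftransform d V ξ = (((ftransform d V ξ).re : ℝ) : ℂ))
    (hpos : ∀ ξ, 0 ≤ (ftransform d V ξ).re) (n k : ℕ) : 0 ≤ Cnk d α V n k := by
  rw [Cnk]
  refine Finset.sum_nonneg fun l' _ => mul_nonneg (Acoef_nonneg _ _ _) (mul_nonneg
    (inv_nonneg.2 (pow_nonneg (by positivity) _)) ?_)
  rw [key_re d (k-1) α V hre l']
  refine integral_nonneg fun θ => mul_nonneg (hpos _) (Finset.prod_nonneg fun i _ =>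
    mul_nonneg (hpos _) (Real.rpow_nonneg (norm_nonneg _) _))

lemma main_core (d : ℕ) (hd : 1 ≤ d) (V : SchwartzMap (Ed d) ℝ)
    (hft : ∀ ξ, (ftransform d (⇑V) ξ).im = 0 ∧ 0 ≤ (ftransform d (⇑V) ξ).re)
    (r : ℝ) (hr : 0 ≤ r)
    (hzero : (∫ ξ : Ed d, (ftransform d (⇑V) (-ξ)).re *
      ((ftransform d (⇑V) ξ).re * ‖ξ‖ ^ r)) = 0) :
    ∀ x, V x = 0 := by
  set Vc : SchwartzMap (Ed d) ℂ := cplx V with hVc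
  have hVcapp : ⇑Vc = fun x => ((V x : ℝ) : ℂ) := rfl
  set ψ : SchwartzMap (Ed d) ℂ := SchwartzMap.fourierTransformCLM ℝ Vc with hψdef
  have hψapp : ⇑ψ = 𝓕 ⇑Vc := rfl
  have hψ : ∀ ξ, ftransform d (⇑V) ξ = ψ ((2 * π)⁻¹ • ξ) := by
    intro ξ
    rw [ftransform_eq_fourierIntegral, hψapp, hVcapp]
  set g : Ed d → ℝ := fun ξ => (ftransform d (⇑V) ξ).re with hgdef
  have hg0 : ∀ ξ, 0 ≤ g ξ := fun ξ => (hft ξ).2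
  have hsym : ∀ ξ, g (-ξ) = g ξ := fun ξ => by
    rw [hgdef]; simp only []; rw [ftransform_neg]; exact Complex.conj_re _
  have hgc : Continuous g := by
    have : g = fun ξ => (ψ ((2 * π)⁻¹ • ξ)).re := funext fun ξ => by
      rw [hgdef]; simp only []; rw [hψ]
    rw [this]
    exact Complex.continuous_re.comp (ψ.continuous.comp (continuous_const_smul _))
  set H : Ed d → ℝ := fun ξ => g ξ * (g ξ * ‖ξ‖ ^ r) with hHdef
  have hH0 : ∀ ξ, 0 ≤ H ξ := fun ξ =>
    mul_nonneg (hg0 ξ) (mul_nonneg (hg0 ξ) (Real.rpow_nonneg (norm_nonneg ξ) r))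
  have hHzero : (∫ ξ : Ed d, H ξ) = 0 := by
    rw [← hzero]
    exact integral_congr_ae (Filter.Eventually.of_forall fun ξ =>
      show g ξ * (g ξ * ‖ξ‖ ^ r) = g (-ξ) * (g ξ * ‖ξ‖ ^ r) by rw [hsym ξ])
  have hπpos : (0:ℝ) < 2 * π := by positivity
  set c : ℝ := (2 * π)⁻¹ with hcdef
  have hc : c ≠ 0 := by positivity
  set m : ℕ := ⌈r⌉₊ with hmdef
  have hrm : r ≤ (m : ℝ) := Nat.le_ceil r
  set K : Ed d → ℝ := fun y => ‖ψ y‖ + ‖y‖ ^ m * ‖ψ y‖ with hKdef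
  have hKint : Integrable K := (ψ.integrable.norm).add (ψ.integrable_pow_mul volume m)
  have hKc : Integrable (fun ξ : Ed d => K (c • ξ)) :=
    (integrable_comp_smul_iff volume K hc).2 hKint
  set C0 : ℝ := SchwartzMap.seminorm ℝ 0 0 ψ with hC0def
  have hC0 : ∀ y, ‖ψ y‖ ≤ C0 := fun y => ψ.norm_le_seminorm ℝ y
  have hC0' : 0 ≤ C0 := le_trans (norm_nonneg _) (hC0 0)
  have hnorm : ∀ ξ : Ed d, ‖ξ‖ = (2 * π) * ‖c • ξ‖ := by
    intro ξ
    rw [norm_smul, hcdef, Real.norm_eq_abs, abs_of_pos (by positivity), ← mul_assoc,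
      mul_inv_cancel₀ (ne_of_gt hπpos), one_mul]
  have hrpow_le : ∀ x : ℝ, 0 ≤ x → x ^ r ≤ 1 + x ^ m := by
    intro x hx
    rcases le_total x 1 with h | h
    · have := Real.rpow_le_one hx h hr
      have h2 : (0:ℝ) ≤ x ^ m := pow_nonneg hx m
      linarith
    · have h1 : x ^ r ≤ x ^ (m:ℝ) := Real.rpow_le_rpow_of_exponent_le h hrm
      rw [Real.rpow_natCast] at h1
      have h2 : (0:ℝ) ≤ x ^ m := pow_nonneg (le_trans zero_le_one h) m
      linarith
  have hbnd : ∀ ξ : Ed d, H ξ ≤ C0 * ((2 * π) ^ r * K (c • ξ)) := by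
    intro ξ
    have hgψ : ∀ η, g η ≤ ‖ψ (c • η)‖ := by
      intro η
      rw [hgdef]; simp only []
      rw [hψ η]
      exact le_trans (Complex.re_le_norm _) (le_of_eq rfl)
    have h1 : g ξ ≤ C0 := le_trans (hgψ ξ) (hC0 _)
    have hξr : ‖ξ‖ ^ r = (2 * π) ^ r * ‖c • ξ‖ ^ r := by
      rw [hnorm ξ, Real.mul_rpow (le_of_lt hπpos) (norm_nonneg _)]
    have h2 : g ξ * ‖ξ‖ ^ r ≤ ‖ψ (c • ξ)‖ * ((2 * π) ^ r * (1 + ‖c • ξ‖ ^ m)) := by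
      refine mul_le_mul (hgψ ξ) ?_ (Real.rpow_nonneg (norm_nonneg _) r) (norm_nonneg _)
      rw [hξr]
      exact mul_le_mul_of_nonneg_left (hrpow_le _ (norm_nonneg _))
        (Real.rpow_nonneg (le_of_lt hπpos) r)
    calc H ξ = g ξ * (g ξ * ‖ξ‖ ^ r) := rfl
      _ ≤ C0 * (‖ψ (c • ξ)‖ * ((2 * π) ^ r * (1 + ‖c • ξ‖ ^ m))) :=
          mul_le_mul h1 h2 (mul_nonneg (hg0 ξ) (Real.rpow_nonneg (norm_nonneg _) r)) hC0'
      _ = C0 * ((2 * π) ^ r * K (c • ξ)) := by rw [hKdef]; ring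
  have hHcont : Continuous H := by
    have hn : Continuous fun ξ : Ed d => ‖ξ‖ ^ r :=
      (Real.continuous_rpow_const hr).comp continuous_norm
    exact hgc.mul (hgc.mul hn)
  have hHint : Integrable H := by
    refine Integrable.mono' ((hKc.const_mul ((2 * π) ^ r)).const_mul C0)
      hHcont.aestronglyMeasurable (Filter.Eventually.of_forall fun ξ => ?_)
    rw [Real.norm_of_nonneg (hH0 ξ)]
    exact hbnd ξ
  have hHae : H =ᵐ[volume] 0 :=
    (integral_eq_zero_iff_of_nonneg hH0 hHint).1 hHzero
  have hne : ∀ ξ : Ed d, ξ ≠ 0 → g ξ = 0 := by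
    intro ξ0 hξ0
    by_contra hgξ0
    set U : Set (Ed d) := {x | x ≠ 0 ∧ g x ≠ 0} with hUdef
    have hUopen : IsOpen U := by
      have : U = {(0 : Ed d)}ᶜ ∩ g ⁻¹' ({(0:ℝ)}ᶜ) := by
        ext x; simp [hUdef]
      rw [this]
      exact isOpen_compl_singleton.inter (isOpen_compl_singleton.preimage hgc)
    have hUsub : U ⊆ {x | ¬ H x = 0} := by
      intro x hx
      have hgx : 0 < g x := lt_of_le_of_ne (hg0 x) (Ne.symm hx.2)
      have hnx : 0 < ‖x‖ ^ r := Real.rpow_pos_of_pos (norm_pos_iff.2 hx.1) r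
      exact ne_of_gt (mul_pos hgx (mul_pos hgx hnx))
    have hnull : volume {x : Ed d | ¬ H x = 0} = 0 := by
      have := hHae
      rw [Filter.EventuallyEq, ae_iff] at this
      simpa using this
    have : volume U = 0 := measure_mono_null hUsub hnull
    exact absurd this (ne_of_gt (hUopen.measure_pos volume ⟨ξ0, hξ0, hgξ0⟩))
  haveI : Nontrivial (Ed d) := by
    haveI : Nonempty (Fin d) := ⟨⟨0, hd⟩⟩
    haveI := (Pi.nontrivial_at (Classical.arbitrary (Fin d)) : Nontrivial (Fin d → ℝ)); infer_instance
  haveI := Module.punctured_nhds_neBot ℝ (Ed d)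
  have hgzero : ∀ ξ, g ξ = 0 := by
    have hdense : Dense {x : Ed d | x ≠ 0} := dense_compl_singleton 0
    have := Continuous.ext_on hdense hgc continuous_const (fun x hx => hne x hx)
    intro ξ; exact congrFun this ξ
  have hFzero : ∀ ξ, ftransform d (⇑V) ξ = 0 := fun ξ =>
    Complex.ext (hgzero ξ) ((hft ξ).1)
  have h𝓕 : 𝓕 (fun x : Ed d => ((V x : ℝ) : ℂ)) = fun _ => 0 := by
    funext y
    have := hψ ((2 * π) • y)
    rw [hFzero] at this
    rw [← hψapp, hVcapp] at *
    have hy : (c • ((2 * π) • y)) = y := by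
      rw [hcdef, smul_smul, inv_mul_cancel₀ (by positivity), one_smul]
    rw [hy] at this
    exact this.symm
  have hVcont : Continuous fun x : Ed d => ((V x : ℝ) : ℂ) :=
    Complex.continuous_ofReal.comp V.continuous
  have hVint : Integrable fun x : Ed d => ((V x : ℝ) : ℂ) := V.integrable.ofReal
  have h𝓕int : Integrable (𝓕 fun x : Ed d => ((V x : ℝ) : ℂ)) := by
    rw [h𝓕]; exact integrable_zero _ _ _
  have hinv := hVcont.fourierInv_fourier_eq hVint h𝓕int
  intro x
  have : 𝓕⁻ (𝓕 fun x : Ed d => ((V x : ℝ) : ℂ)) x = ((V x : ℝ) : ℂ) := by rw [hinv]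
  rw [h𝓕] at this
  rw [Real.fourierInv_eq] at this
  simp only [smul_zero, integral_zero] at this
  exact_mod_cast this.symm

end AuxLemmas

/-- Corollary 3.4: if `V̂ ≥ 0` (real and nonnegative) and `C_ℓ(V) = 0` for some `ℓ ≥ 2`,
then `V ≡ 0`. -/
theorem vanishing_coefficient_implies_zero
    (d : ℕ) (hd : 1 ≤ d) (α : ℝ) (hα0 : 0 < α) (hα2 : α ≤ 2)
    (V : SchwartzMap (Ed d) ℝ)
    (hft : ∀ ξ, (ftransform d (⇑V) ξ).im = 0 ∧ 0 ≤ (ftransform d (⇑V) ξ).re)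
    (l : ℕ) (hl : 2 ≤ l) (hC : Cl d α (⇑V) l = 0) :
    ∀ x, V x = 0 := by
  classical
  have hre : ∀ ξ, ftransform d (⇑V) ξ = (((ftransform d (⇑V) ξ).re : ℝ) : ℂ) := fun ξ =>
    Complex.ext rfl (by simp [(hft ξ).1])
  have hpos : ∀ ξ, 0 ≤ (ftransform d (⇑V) ξ).re := fun ξ => (hft ξ).2
  set n : ℕ := l - 2 with hn
  -- each term of Cl is nonnegative, so the (n, 2) term vanishes
  have hmem : ((n, 2) : ℕ × ℕ) ∈ (Finset.HasAntidiagonal.antidiagonal l).filter (fun p => 2 ≤ p.2) :=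
    Finset.mem_filter.2 ⟨Finset.HasAntidiagonal.mem_antidiagonal.2 (by omega), le_refl 2⟩
  have hterm : Cnk d α (⇑V) n 2 / ((n.factorial : ℝ)) = 0 := by
    have := (Finset.sum_eq_zero_iff_of_nonneg (fun p _ =>
      div_nonneg (Cnk_nonneg d α (⇑V) hre hpos p.1 p.2) (Nat.cast_nonneg _))).1 hC
    exact this (n, 2) hmem
  have hCnk : Cnk d α (⇑V) n 2 = 0 := by
    have hfac : ((n.factorial : ℝ)) ≠ 0 := Nat.cast_ne_zero.2 n.factorial_ne_zero
    field_simp at hterm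
    simpa using hterm
  -- expand Cnk at k = 2
  rw [Cnk] at hCnk
  rw [show (Finset.Nat.antidiagonalTuple (2-1) n) = {![n]}
    from Finset.Nat.antidiagonalTuple_one n, Finset.sum_singleton] at hCnk
  have hApos := Acoef_two_pos n
  have hinvpos : (0:ℝ) < (((2 * Real.pi) ^ (d * (2 - 1)))⁻¹) := by positivity
  have hR : (∫ θ : Fin (2-1) → Ed d,
      ftransform d (⇑V) (-(∑ i, θ i)) *
        ∏ i : Fin (2-1), (ftransform d (⇑V) (θ i) *
          ((‖∑ j ∈ Finset.Iic i, θ j‖ ^ (α * ((![n] : Fin (2-1) → ℕ) i : ℝ)) : ℝ) : ℂ))).re = 0 := by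
    rcases mul_eq_zero.1 hCnk with h | h
    · exact absurd h (ne_of_gt hApos)
    rcases mul_eq_zero.1 h with h' | h'
    · exact absurd h' (ne_of_gt hinvpos)
    exact h'
  rw [key_re d (2-1) α (⇑V) hre] at hR
  -- simplify the `Fin 1` integral
  have hIic : ∀ (i : Fin (2-1)) (θ : Fin (2-1) → Ed d), ∑ j ∈ Finset.Iic i, θ j = θ 0 := by
    intro i θ
    have h0 : ∀ j : Fin (2-1), j = 0 := fun j => Fin.ext (by
      have := j.isLt
      have h00 : (0 : Fin (2-1)).1 = 0 := rfl
      omega)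
    rw [show Finset.Iic i = {(0 : Fin (2-1))} by
      ext j
      rw [h0 j, h0 i]
      simp]
    exact Finset.sum_singleton _ _
  have hint : ∀ θ : Fin (2-1) → Ed d,
      (ftransform d (⇑V) (-(∑ i, θ i))).re *
        ∏ i : Fin (2-1), ((ftransform d (⇑V) (θ i)).re *
          ‖∑ j ∈ Finset.Iic i, θ j‖ ^ (α * ((![n] : Fin (2-1) → ℕ) i : ℝ)))
      = (ftransform d (⇑V) (-(θ 0))).re *
          ((ftransform d (⇑V) (θ 0)).re * ‖θ 0‖ ^ (α * (n : ℝ))) := by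
    intro θ
    rw [Fin.sum_univ_one, Fin.prod_univ_one, hIic 0 θ]
    norm_num
  rw [integral_congr_ae (Filter.Eventually.of_forall fun θ => hint θ)] at hR
  -- transfer the integral from `Fin 1 → Ed d` to `Ed d`
  have hmp := MeasureTheory.volume_preserving_funUnique (Fin 1) (Ed d)
  have htrans := hmp.integral_comp (MeasurableEquiv.funUnique (Fin 1) (Ed d)).measurableEmbedding
    (fun ξ : Ed d => (ftransform d (⇑V) (-ξ)).re *
      ((ftransform d (⇑V) ξ).re * ‖ξ‖ ^ (α * (n : ℝ))))
  have hzero : (∫ ξ : Ed d, (ftransform d (⇑V) (-ξ)).re *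
      ((ftransform d (⇑V) ξ).re * ‖ξ‖ ^ (α * (n : ℝ)))) = 0 := by
    rw [← htrans]
    exact hR
  exact main_core d hd V hft (α * (n : ℝ)) (mul_nonneg (le_of_lt hα0) (Nat.cast_nonneg n)) hzero

end
end

section
/- Let k ≥ 3 be an integer and let ℓ_1, ..., ℓ_{k-1} be nonnegative real numbers with ℓ_1 + ... + ℓ_{k-1} = n. Then ∫_{I_k} ∏_{i=1}^{k-1} (λ_i - λ_{i+1})^{ℓ_i} dλ = (1 / ((k+n)(ℓ_{k-1}+1))) ∏_{i=1}^{k-2} ∫_0^1 (1-s)^{ℓ_i} s^{ k + n - (i + 1 + Σ_{j=1}^{i} ℓ_j) } ds. -/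
open MeasureTheory Real Filter Topology Asymptotics
open scoped RealInnerProductSpace

noncomputable section

namespace SimplexAux

def phiMap (K : ℕ) (x : Fin K → ℝ) : Fin K → ℝ := fun i => ∏ m ∈ Finset.Iic i, x m

def cube (K : ℕ) : Set (Fin K → ℝ) := Set.univ.pi fun _ => Set.Ioo (0:ℝ) 1

lemma cube_measurable (K : ℕ) : MeasurableSet (cube K) :=
  MeasurableSet.univ_pi fun _ => measurableSet_Ioo

lemma mem_cube {K : ℕ} {x : Fin K → ℝ} : x ∈ cube K ↔ ∀ i, x i ∈ Set.Ioo (0:ℝ) 1 := by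
  simp [cube]

lemma Iic_succ {K : ℕ} (i : Fin K) :
    Finset.Iic (i.succ) = insert i.succ (Finset.Iic i.castSucc) := by
  ext m
  simp only [Finset.mem_Iic, Finset.mem_insert, Fin.le_def, Fin.ext_iff, Fin.val_succ,
    Fin.coe_castSucc]
  omega

lemma Iic_zero (K : ℕ) : Finset.Iic (0 : Fin (K+1)) = {0} := by
  ext m; simp [Finset.mem_Iic, Fin.le_zero_iff]

lemma phi_zero {K : ℕ} (x : Fin (K+1) → ℝ) : phiMap (K+1) x 0 = x 0 := by
  simp [phiMap, Iic_zero]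

lemma phi_succ {K : ℕ} (x : Fin (K+1) → ℝ) (i : Fin K) :
    phiMap (K+1) x i.succ = x i.succ * phiMap (K+1) x i.castSucc := by
  unfold phiMap
  rw [Iic_succ, Finset.prod_insert (by
    simp only [Finset.mem_Iic]; exact (Fin.castSucc_lt_succ : i.castSucc < i.succ).not_ge)]

lemma phi_pos {K : ℕ} {x : Fin K → ℝ} (hx : x ∈ cube K) (i : Fin K) :
    0 < phiMap K x i :=
  Finset.prod_pos fun m _ => (mem_cube.1 hx m).1

lemma prod_le_one' {K : ℕ} {x : Fin K → ℝ} (hx : x ∈ cube K) (s : Finset (Fin K)) :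
    ∏ m ∈ s, x m ≤ 1 :=
  Finset.prod_le_one (fun m _ => (mem_cube.1 hx m).1.le) (fun m _ => (mem_cube.1 hx m).2.le)

lemma prod_lt_one' {K : ℕ} {x : Fin K → ℝ} (hx : x ∈ cube K) {s : Finset (Fin K)}
    {a : Fin K} (ha : a ∈ s) : ∏ m ∈ s, x m < 1 := by
  rw [← Finset.mul_prod_erase s x ha]
  calc x a * ∏ m ∈ s.erase a, x m ≤ x a * 1 := by
        have := prod_le_one' hx (s.erase a)
        have hxa := (mem_cube.1 hx a).1.le
        nlinarith [Finset.prod_nonneg (fun m (_ : m ∈ s.erase a) => (mem_cube.1 hx m).1.le)]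
    _ = x a := mul_one _
    _ < 1 := (mem_cube.1 hx a).2

lemma phi_lt_one {K : ℕ} {x : Fin K → ℝ} (hx : x ∈ cube K) (i : Fin K) :
    phiMap K x i < 1 :=
  prod_lt_one' hx (Finset.mem_Iic.2 le_rfl)

lemma phi_strictAnti {K : ℕ} {x : Fin K → ℝ} (hx : x ∈ cube K) {i j : Fin K}
    (hij : i < j) : phiMap K x j < phiMap K x i := by
  have hsub : Finset.Iic i ⊆ Finset.Iic j := Finset.Iic_subset_Iic.2 hij.le
  have hsplit : (∏ m ∈ Finset.Iic j \ Finset.Iic i, x m) * ∏ m ∈ Finset.Iic i, x m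
      = ∏ m ∈ Finset.Iic j, x m := Finset.prod_sdiff hsub
  have hjmem : j ∈ Finset.Iic j \ Finset.Iic i := by
    simp [Finset.mem_sdiff, Finset.mem_Iic, hij.not_ge]
  have hlt : (∏ m ∈ Finset.Iic j \ Finset.Iic i, x m) < 1 := prod_lt_one' hx hjmem
  have hpos : (0:ℝ) < ∏ m ∈ Finset.Iic i, x m := phi_pos hx i
  unfold phiMap
  rw [← hsplit]
  nlinarith
lemma phi_image {K : ℕ} : phiMap (K+1) '' cube (K+1) = Ik (K+1) := by
  apply Set.Subset.antisymm
  · rintro _ ⟨x, hx, rfl⟩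
    refine ⟨fun i j hij => phi_strictAnti hx hij, fun i => ⟨phi_pos hx i, phi_lt_one hx i⟩⟩
  · rintro lam ⟨hmono, hmem⟩
    refine ⟨fun j => Fin.cases (lam 0) (fun i => lam i.succ / lam i.castSucc) j, ?_, ?_⟩
    · rw [mem_cube]
      intro j
      induction j using Fin.cases with
      | zero => simpa using hmem 0
      | succ i =>
        simp only [Fin.cases_succ]
        constructor
        · exact div_pos (hmem i.succ).1 (hmem i.castSucc).1
        · exact (div_lt_one (hmem i.castSucc).1).2
            (hmono _ _ (Fin.castSucc_lt_succ : i.castSucc < i.succ))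
    · funext j
      induction j using Fin.induction with
      | zero => rw [phi_zero]; simp
      | succ i ih =>
        rw [phi_succ]
        simp only [Fin.cases_succ]
        rw [ih]
        exact div_mul_cancel₀ _ (ne_of_gt (hmem i.castSucc).1)

lemma phi_injOn {K : ℕ} : Set.InjOn (phiMap (K+1)) (cube (K+1)) := by
  intro x hx y hy h
  funext j
  induction j using Fin.cases with
  | zero =>
    have := congrFun h 0
    rwa [phi_zero, phi_zero] at this
  | succ i =>
    have h1 := congrFun h i.succ
    have h2 := congrFun h i.castSucc
    rw [phi_succ, phi_succ] at h1
    rw [h2] at h1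
    exact mul_right_cancel₀ (ne_of_gt (phi_pos hy i.castSucc)) h1

def Mjac (K : ℕ) (x : Fin K → ℝ) : Matrix (Fin K) (Fin K) ℝ :=
  fun i m => if m ≤ i then ∏ j ∈ (Finset.Iic i).erase m, x j else 0

def fder (K : ℕ) (x : Fin K → ℝ) : (Fin K → ℝ) →L[ℝ] (Fin K → ℝ) :=
  LinearMap.toContinuousLinearMap (Matrix.toLin' (Mjac K x))

lemma hasFDeriv_phi (K : ℕ) (x : Fin K → ℝ) :
    HasFDerivAt (phiMap K) (fder K x) x := by
  apply hasFDerivAt_pi''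
  intro i
  have h : HasFDerivAt (fun y : Fin K → ℝ => ∏ m ∈ Finset.Iic i, y m)
      (∑ m ∈ Finset.Iic i, (∏ j ∈ (Finset.Iic i).erase m, x j) • ContinuousLinearMap.proj m) x :=
    HasFDerivAt.finset_prod (𝕜 := ℝ) (fun m _ => hasFDerivAt_apply (𝕜 := ℝ) m x)
  refine h.congr_fderiv (Eq.symm ?_)
  ext v
  simp only [ContinuousLinearMap.coe_comp', Function.comp_apply, ContinuousLinearMap.proj_apply,
    fder, LinearMap.coe_toContinuousLinearMap', Matrix.toLin'_apply, Matrix.mulVec, dotProduct,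
    Mjac, ContinuousLinearMap.coe_sum', Finset.sum_apply, ContinuousLinearMap.coe_smul',
    Pi.smul_apply, smul_eq_mul, ite_mul, zero_mul]
  simp only [← Finset.mem_Iic]
  rw [Finset.sum_ite_mem, Finset.univ_inter]

lemma det_fder {K : ℕ} (x : Fin K → ℝ) :
    (fder K x).det = ∏ i : Fin K, ∏ j ∈ Finset.Iio i, x j := by
  have h1 : (fder K x).det = LinearMap.det (Matrix.toLin' (Mjac K x)) := by
    rw [ContinuousLinearMap.det]
    congr 1
  rw [h1, LinearMap.det_toLin']
  rw [Matrix.det_of_lowerTriangular (Mjac K x) (by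
    intro i j hij
    have : i < j := hij
    simp only [Mjac, if_neg (not_le.2 this)])]
  apply Finset.prod_congr rfl
  intro i _
  simp [Mjac, Finset.Iic_erase]

lemma abs_det_fder {K : ℕ} {x : Fin K → ℝ} (hx : x ∈ cube K) :
    |(fder K x).det| = ∏ i : Fin K, ∏ j ∈ Finset.Iio i, x j := by
  rw [det_fder, abs_of_pos]
  exact Finset.prod_pos fun i _ => Finset.prod_pos fun j _ => (mem_cube.1 hx j).1

lemma rpow_finset_sum {x : ℝ} (hx : 0 < x) {ι : Type*} (s : Finset ι) (f : ι → ℝ) :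
    x ^ (∑ i ∈ s, f i) = ∏ i ∈ s, x ^ f i := by
  classical
  induction s using Finset.cons_induction with
  | empty => simp
  | cons a s ha ih => rw [Finset.sum_cons, Finset.prod_cons, Real.rpow_add hx, ih]

def Gfun (K : ℕ) (l : Fin (K+1) → ℝ) (j : Fin (K+2)) (s : ℝ) : ℝ :=
  Fin.cases (s ^ ((K:ℝ) + 1 + ∑ i, l i))
    (fun j' : Fin (K+1) => (1 - s) ^ (l j') * s ^ ((K:ℝ) - j'.1 + ∑ i ∈ Finset.Ioi j', l i)) j

def Efun (K : ℕ) (l : Fin (K+1) → ℝ) (m : Fin (K+2)) : ℝ :=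
  ((Finset.Ioi m).card : ℝ) +
    ∑ i ∈ Finset.univ.filter (fun i : Fin (K+1) => m ≤ i.castSucc), l i

lemma Efun_zero (K : ℕ) (l : Fin (K+1) → ℝ) :
    Efun K l 0 = (K:ℝ) + 1 + ∑ i, l i := by
  unfold Efun
  rw [Finset.filter_true_of_mem (fun i _ => Fin.zero_le _)]
  congr 1
  rw [Fin.card_Ioi]
  push_cast
  norm_num

lemma Efun_succ (K : ℕ) (l : Fin (K+1) → ℝ) (j' : Fin (K+1)) :
    Efun K l j'.succ = (K:ℝ) - j'.1 + ∑ i ∈ Finset.Ioi j', l i := by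
  unfold Efun
  have hfil : Finset.univ.filter (fun i : Fin (K+1) => j'.succ ≤ i.castSucc)
      = Finset.Ioi j' := by
    ext i
    simp only [Finset.mem_filter, Finset.mem_univ, true_and, Finset.mem_Ioi,
      Fin.le_def, Fin.lt_def, Fin.val_succ, Fin.coe_castSucc]
    omega
  rw [hfil]
  congr 1
  rw [Fin.card_Ioi, Fin.val_succ]
  have hle : j'.1 ≤ K := Nat.lt_succ_iff.mp j'.isLt
  have : K + 2 - 1 - (j'.1 + 1) = K - j'.1 := by omega
  rw [this, Nat.cast_sub hle]

lemma pointwise_eq {K : ℕ} (l : Fin (K+1) → ℝ)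
    {x : Fin (K+2) → ℝ} (hx : x ∈ cube (K+2)) :
    |(fder (K+2) x).det| •
      ∏ i : Fin (K+1), (phiMap (K+2) x i.castSucc - phiMap (K+2) x i.succ) ^ (l i)
    = ∏ j : Fin (K+2), Gfun K l j (x j) := by
  have hxm := mem_cube.1 hx
  have hxp : ∀ j, (0:ℝ) < x j := fun j => (hxm j).1
  have h1x : ∀ j, (0:ℝ) ≤ 1 - x j := fun j => by linarith [(hxm j).2]
  have hdiff : ∀ i : Fin (K+1),
      (phiMap (K+2) x i.castSucc - phiMap (K+2) x i.succ) ^ (l i)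
        = (∏ m ∈ Finset.Iic i.castSucc, x m ^ (l i)) * (1 - x i.succ) ^ (l i) := by
    intro i
    rw [phi_succ]
    have h2 : phiMap (K+2) x i.castSucc - x i.succ * phiMap (K+2) x i.castSucc
        = phiMap (K+2) x i.castSucc * (1 - x i.succ) := by ring
    rw [h2, Real.mul_rpow (phi_pos hx i.castSucc).le (h1x i.succ),
      Real.finset_prod_rpow _ _ (fun m _ => (hxp m).le)]
    rfl
  have hswap1 : (∏ i : Fin (K+2), ∏ j ∈ Finset.Iio i, x j)
      = ∏ m : Fin (K+2), x m ^ ((Finset.Ioi m).card) := by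
    rw [Finset.prod_comm' (t' := (Finset.univ : Finset (Fin (K+2))))
      (s' := fun m => Finset.Ioi m)
      (fun i m => by simp [Finset.mem_Iio, Finset.mem_Ioi])]
    exact Finset.prod_congr rfl fun m _ => Finset.prod_const _
  have hswap2 : (∏ i : Fin (K+1), ∏ m ∈ Finset.Iic i.castSucc, x m ^ (l i))
      = ∏ m : Fin (K+2), x m ^
          (∑ i ∈ Finset.univ.filter (fun i : Fin (K+1) => m ≤ i.castSucc), l i) := by
    rw [Finset.prod_comm' (t' := (Finset.univ : Finset (Fin (K+2))))
      (s' := fun m => Finset.univ.filter (fun i : Fin (K+1) => m ≤ i.castSucc))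
      (fun i m => by simp [Finset.mem_Iic, Finset.mem_filter])]
    exact Finset.prod_congr rfl fun m _ => (rpow_finset_sum (hxp m) _ _).symm
  calc |(fder (K+2) x).det| •
      ∏ i : Fin (K+1), (phiMap (K+2) x i.castSucc - phiMap (K+2) x i.succ) ^ (l i)
      = (∏ i : Fin (K+2), ∏ j ∈ Finset.Iio i, x j) *
        ((∏ i : Fin (K+1), ∏ m ∈ Finset.Iic i.castSucc, x m ^ (l i)) *
         (∏ i : Fin (K+1), (1 - x i.succ) ^ (l i))) := by
        rw [abs_det_fder hx, smul_eq_mul,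
          Finset.prod_congr rfl (fun i _ => hdiff i), Finset.prod_mul_distrib]
    _ = (∏ m : Fin (K+2), x m ^ (Efun K l m)) *
         (∏ i : Fin (K+1), (1 - x i.succ) ^ (l i)) := by
        rw [hswap1, hswap2, ← mul_assoc, ← Finset.prod_mul_distrib]
        congr 1
        refine Finset.prod_congr rfl fun m _ => ?_
        rw [← Real.rpow_natCast (x m) ((Finset.Ioi m).card), ← Real.rpow_add (hxp m)]
        rfl
    _ = ∏ j : Fin (K+2), Gfun K l j (x j) := by
        rw [Fin.prod_univ_succ (f := fun m : Fin (K+2) => x m ^ (Efun K l m)),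
          Fin.prod_univ_succ (f := fun j : Fin (K+2) => Gfun K l j (x j))]
        simp only [Gfun, Fin.cases_zero, Fin.cases_succ]
        rw [Finset.prod_mul_distrib, Efun_zero,
          Finset.prod_congr rfl (fun j' (_ : j' ∈ Finset.univ) => by rw [Efun_succ K l j'])]
        ring

lemma core (K : ℕ) (l : Fin (K+1) → ℝ) :
    (∫ lam in Ik (K+2), ∏ i : Fin (K+1), (lam i.castSucc - lam i.succ) ^ (l i))
      = ∏ j : Fin (K+2), ∫ s in Set.Ioo (0:ℝ) 1, Gfun K l j s := by
  rw [← phi_image (K := K+1)]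
  rw [MeasureTheory.integral_image_eq_integral_abs_det_fderiv_smul volume (cube_measurable (K+2))
    (fun x _ => (hasFDeriv_phi (K+2) x).hasFDerivWithinAt) phi_injOn]
  rw [MeasureTheory.setIntegral_congr_fun (cube_measurable (K+2))
    (fun x hx => pointwise_eq l hx)]
  rw [← MeasureTheory.integral_indicator (cube_measurable (K+2))]
  have hind : (cube (K+2)).indicator (fun x => ∏ j, Gfun K l j (x j))
      = fun x => ∏ j, (Set.Ioo (0:ℝ) 1).indicator (Gfun K l j) (x j) := by
    funext x
    by_cases hx : x ∈ cube (K+2)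
    · rw [Set.indicator_of_mem hx]
      exact Finset.prod_congr rfl fun j _ => (Set.indicator_of_mem (mem_cube.1 hx j) _).symm
    · rw [Set.indicator_of_notMem hx]
      obtain ⟨j, hj⟩ : ∃ j, x j ∉ Set.Ioo (0:ℝ) 1 := by
        by_contra h; push_neg at h; exact hx (mem_cube.2 h)
      symm
      apply Finset.prod_eq_zero (Finset.mem_univ j)
      rw [Set.indicator_of_notMem hj]
  rw [hind]
  exact (MeasureTheory.integral_fintype_prod_eq_prod (μ := fun _ => (volume : Measure ℝ))
      (f := fun j => (Set.Ioo (0:ℝ) 1).indicator (Gfun K l j))).trans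
    (Finset.prod_congr rfl fun j _ => MeasureTheory.integral_indicator measurableSet_Ioo)

lemma integral_Ioo_rpow {a : ℝ} (ha : 0 ≤ a) :
    ∫ s in Set.Ioo (0:ℝ) 1, s ^ a = 1/(a+1) := by
  rw [← MeasureTheory.integral_Ioc_eq_integral_Ioo,
    ← intervalIntegral.integral_of_le zero_le_one,
    integral_rpow (Or.inl (by linarith))]
  rw [Real.one_rpow, Real.zero_rpow (by linarith : a + 1 ≠ 0)]
  ring

lemma integral_Ioo_one_sub_rpow {a : ℝ} (ha : 0 ≤ a) :
    ∫ s in Set.Ioo (0:ℝ) 1, (1 - s) ^ a = 1/(a+1) := by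
  rw [← MeasureTheory.integral_Ioc_eq_integral_Ioo,
    ← intervalIntegral.integral_of_le zero_le_one]
  have h := intervalIntegral.integral_comp_sub_left (a := (0:ℝ)) (b := 1)
    (fun s : ℝ => s ^ a) 1
  norm_num at h
  rw [h, integral_rpow (Or.inl (by linarith))]
  rw [Real.one_rpow, Real.zero_rpow (by linarith : a + 1 ≠ 0)]
  ring

lemma sum_Iic_add_sum_Ioi {M : Type*} [AddCommMonoid M] {m : ℕ} (f : Fin m → M) (a : Fin m) :
    ((∑ j ∈ Finset.Iic a, f j) + ∑ j ∈ Finset.Ioi a, f j) = ∑ j, f j := by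
  rw [← Finset.sum_union (by
    simp only [Finset.disjoint_left, Finset.mem_Iic, Finset.mem_Ioi]
    exact fun x hx hx2 => absurd hx (not_le.2 hx2))]
  apply Finset.sum_congr _ (fun _ _ => rfl)
  ext x
  simp [le_or_gt]

theorem clean (N : ℕ) (n : ℝ) (l : Fin (N+1+1) → ℝ) (hl : ∀ i, 0 ≤ l i)
    (hsum : ∑ i, l i = n) :
    (∫ lam in Ik (N+1+2), ∏ i : Fin (N+1+1), (lam i.castSucc - lam i.succ) ^ (l i)) =
      (1 / (((((N+3 : ℕ)) : ℝ) + n) * (l (Fin.last (N+1)) + 1))) *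
        ∏ i : Fin (N+1), ∫ s in (0:ℝ)..1,
          (1 - s) ^ (l i.castSucc) *
            s ^ ((((N+3 : ℕ)) : ℝ) + n -
              ((i.1 : ℝ) + 2 + ∑ j ∈ Finset.Iic i.castSucc, l j)) := by
  have hn : 0 ≤ n := hsum ▸ Finset.sum_nonneg fun i _ => hl i
  rw [core (N+1) l]
  rw [Fin.prod_univ_succ (f := fun j : Fin (N+3) => ∫ s in Set.Ioo (0:ℝ) 1, Gfun (N+1) l j s)]
  rw [Fin.prod_univ_castSucc
    (f := fun j' : Fin (N+2) => ∫ s in Set.Ioo (0:ℝ) 1, Gfun (N+1) l j'.succ s)]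
  have hval0 : (∫ s in Set.Ioo (0:ℝ) 1, Gfun (N+1) l 0 s) = 1/((((N+3 : ℕ)) : ℝ) + n) := by
    simp only [Gfun, Fin.cases_zero, hsum]
    rw [integral_Ioo_rpow (by positivity)]
    push_cast
    ring_nf
  have hlast : (∫ s in Set.Ioo (0:ℝ) 1, Gfun (N+1) l (Fin.last (N+1)).succ s)
      = 1/(l (Fin.last (N+1)) + 1) := by
    simp only [Gfun, Fin.cases_succ]
    have hIoi : Finset.Ioi (Fin.last (N+1)) = ∅ := by
      ext i
      simp only [Finset.mem_Ioi, Finset.notMem_empty, iff_false, not_lt]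
      exact Fin.le_last i
    have hz : (((N+1 : ℕ)) : ℝ) - ((Fin.last (N+1)).1 : ℝ) +
        ∑ i ∈ Finset.Ioi (Fin.last (N+1)), l i = 0 := by
      rw [hIoi]
      simp [Fin.val_last]
    rw [hz]
    simp only [Real.rpow_zero, mul_one]
    exact integral_Ioo_one_sub_rpow (hl _)
  have hmid : ∀ i : Fin (N+1),
      (∫ s in Set.Ioo (0:ℝ) 1, Gfun (N+1) l (i.castSucc).succ s)
        = ∫ s in (0:ℝ)..1, (1 - s) ^ (l i.castSucc) *
            s ^ ((((N+3 : ℕ)) : ℝ) + n -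
              ((i.1 : ℝ) + 2 + ∑ j ∈ Finset.Iic i.castSucc, l j)) := by
    intro i
    simp only [Gfun, Fin.cases_succ]
    have hS := sum_Iic_add_sum_Ioi l i.castSucc
    rw [hsum] at hS
    have hco : ((i.castSucc).1 : ℝ) = (i.1 : ℝ) := by rw [Fin.coe_castSucc]
    have hexp : (((N+3 : ℕ)) : ℝ) + n -
        ((i.1 : ℝ) + 2 + ∑ j ∈ Finset.Iic i.castSucc, l j)
        = (((N+1 : ℕ)) : ℝ) - ((i.castSucc).1 : ℝ) +
          ∑ j ∈ Finset.Ioi i.castSucc, l j := by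
      rw [hco]
      push_cast
      linarith
    rw [intervalIntegral.integral_of_le zero_le_one,
      MeasureTheory.integral_Ioc_eq_integral_Ioo, hexp]
  rw [hval0, hlast, Finset.prod_congr rfl (fun i _ => hmid i), one_div, one_div, one_div,
    mul_inv]
  ring

end SimplexAux


/-- Lemma 4.1(b): for `k ≥ 3` and nonnegative reals `ℓ₁,...,ℓ_{k-1}` with `Σℓᵢ = n`,
`∫_{I_k} ∏ᵢ (λᵢ - λ_{i+1})^{ℓᵢ} dλ
  = (1/((k+n)(ℓ_{k-1}+1))) ∏_{i=1}^{k-2} ∫₀¹ (1-s)^{ℓᵢ} s^{k+n-(i+1+Σ_{j≤i}ℓⱼ)} ds`. -/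
theorem simplex_integral_general
    (k : ℕ) (hk : 3 ≤ k) (n : ℝ) (l : Fin (k - 1) → ℝ) (hl : ∀ i, 0 ≤ l i)
    (hsum : ∑ i, l i = n) :
    (∫ lam in Ik k, ∏ i : Fin (k - 1),
        (lam ⟨i.1, by have := i.isLt; omega⟩ -
          lam ⟨i.1 + 1, by have := i.isLt; omega⟩) ^ (l i)) =
      (1 / (((k : ℝ) + n) * (l ⟨k - 2, by omega⟩ + 1))) *
        ∏ i : Fin (k - 2),
          ∫ s in (0 : ℝ)..1,
            (1 - s) ^ (l ⟨i.1, by have := i.isLt; omega⟩) *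
              s ^ ((k : ℝ) + n -
                ((i.1 : ℝ) + 2 +
                  ∑ j ∈ Finset.Iic (⟨i.1, by have := i.isLt; omega⟩ : Fin (k - 1)), l j)) := by
  obtain ⟨N, rfl⟩ : ∃ N, k = N + 3 := ⟨k - 3, by omega⟩
  exact SimplexAux.clean N n l hl hsum

end
end
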